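/- Let m be a natural number and let I ⊆ J be finsets of Fin m. Then the intersection stab(I) ⊓ stab(J) of the stabilizer subgroups in Equiv.Perm (Fin m) is isomorphic as a group (via a MulEquiv) to the product Equiv.Perm ↥I × Equiv.Perm ↥(J \ I) × Equiv.Perm ↥(Jᶜ), where J \ I is the finset difference and Jᶜ is the complement finset of J in Fin m. (This is the identity of Young subgroups Σ_a × Σ_{m−a} ∩ Σ_b × Σ_{m−b} = Σ_a × Σ_{b−a} × Σ_{m−b} for a = |I| ≤ b = |J| ≤ m.) -/

import Mathlib

/-- The stabilizer `stab(J) = {g | J.image g = J}` of a finset `J` in the symmetric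
group `Equiv.Perm α`. -/
def stab {α : Type*} [DecidableEq α] (J : Finset α) : Subgroup (Equiv.Perm α) where
  carrier := {g | J.image ⇑g = J}
  one_mem' := by simp
  mul_mem' := by
    intro g h hg hh
    simp only [Set.mem_setOf_eq] at *
    rw [Equiv.Perm.coe_mul, ← Finset.image_image, hh, hg]
  inv_mem' := by
    intro g hg
    simp only [Set.mem_setOf_eq] at *
    conv_lhs => rw [← hg]
    rw [Finset.image_image]
    simp [Function.comp_def]

lemma stab_mem_iff {α : Type*} [DecidableEq α] {K : Finset α} {g : Equiv.Perm α}
    (hg : g ∈ stab K) (x : α) : x ∈ K ↔ g x ∈ K := by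
  have hg' : K.image ⇑g = K := hg
  constructor
  · intro hx
    rw [← hg']
    exact Finset.mem_image_of_mem _ hx
  · intro hx
    rw [← hg'] at hx
    obtain ⟨y, hy, hyx⟩ := Finset.mem_image.mp hx
    rwa [← g.injective hyx]


/-- For finsets `I ⊆ J` of `Fin m`, the intersection of the stabilizers
`stab(I) ⊓ stab(J)` in `Equiv.Perm (Fin m)` is isomorphic, as a group, to
`Perm ↥I × Perm ↥(J \ I) × Perm ↥(Jᶜ)` (the Young subgroup identity
`Σ_a × Σ_{m-a} ∩ Σ_b × Σ_{m-b} = Σ_a × Σ_{b-a} × Σ_{m-b}`). -/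
theorem stmt_9 {m : ℕ} (I J : Finset (Fin m)) (hIJ : I ⊆ J) :
    Nonempty ((↥(stab I ⊓ stab J)) ≃*
      Equiv.Perm {x // x ∈ I} × Equiv.Perm {x // x ∈ J \ I} × Equiv.Perm {x // x ∈ Jᶜ}) := by
  have hI : ∀ g : ↥(stab I ⊓ stab J), ∀ x, x ∈ I ↔ g.1 x ∈ I :=
    fun g x => stab_mem_iff g.2.1 x
  have hJ : ∀ g : ↥(stab I ⊓ stab J), ∀ x, x ∈ J ↔ g.1 x ∈ J :=
    fun g x => stab_mem_iff g.2.2 x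
  have hD : ∀ g : ↥(stab I ⊓ stab J), ∀ x, x ∈ J \ I ↔ g.1 x ∈ J \ I := by
    intro g x
    simp only [Finset.mem_sdiff, ← hI g x, ← hJ g x]
  have hC : ∀ g : ↥(stab I ⊓ stab J), ∀ x, x ∈ Jᶜ ↔ g.1 x ∈ Jᶜ := by
    intro g x
    simp only [Finset.mem_compl, ← hJ g x]
  let F : ↥(stab I ⊓ stab J) →*
      Equiv.Perm {x // x ∈ I} × Equiv.Perm {x // x ∈ J \ I} × Equiv.Perm {x // x ∈ Jᶜ} :=
    { toFun := fun g => (g.1.subtypePerm (fun x => (hI g x).symm), g.1.subtypePerm (fun x => (hD g x).symm), g.1.subtypePerm (fun x => (hC g x).symm))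
      map_one' := rfl
      map_mul' := fun g h => rfl }
  refine ⟨MulEquiv.ofBijective F ⟨?_, ?_⟩⟩
  · intro g h hgh
    rw [Prod.ext_iff, Prod.ext_iff] at hgh
    obtain ⟨h1, h2, h3⟩ := hgh
    apply Subtype.ext
    apply Equiv.ext
    intro x
    by_cases hx : x ∈ I
    · exact congrArg Subtype.val (Equiv.ext_iff.mp h1 ⟨x, hx⟩)
    · by_cases hx2 : x ∈ J
      · exact congrArg Subtype.val (Equiv.ext_iff.mp h2 ⟨x, Finset.mem_sdiff.mpr ⟨hx2, hx⟩⟩)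
      · exact congrArg Subtype.val (Equiv.ext_iff.mp h3 ⟨x, Finset.mem_compl.mpr hx2⟩)
  · rintro ⟨a, b, c⟩
    -- glue
    classical
    set f : Fin m → Fin m := fun x =>
      if h : x ∈ I then (a ⟨x, h⟩ : Fin m)
      else if h2 : x ∈ J then (b ⟨x, Finset.mem_sdiff.mpr ⟨h2, h⟩⟩ : Fin m)
      else (c ⟨x, Finset.mem_compl.mpr h2⟩ : Fin m) with hf
    set finv : Fin m → Fin m := fun x =>
      if h : x ∈ I then (a⁻¹ ⟨x, h⟩ : Fin m)
      else if h2 : x ∈ J then (b⁻¹ ⟨x, Finset.mem_sdiff.mpr ⟨h2, h⟩⟩ : Fin m)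
      else (c⁻¹ ⟨x, Finset.mem_compl.mpr h2⟩ : Fin m) with hfinv
    have hfI : ∀ x (h : x ∈ I), f x = a ⟨x, h⟩ := by intro x h; simp [hf, h]
    have hfD : ∀ x (h : x ∈ J \ I), f x = b ⟨x, h⟩ := by
      intro x h
      obtain ⟨h2, h1⟩ := Finset.mem_sdiff.mp h
      simp [hf, h1, h2]
    have hfC : ∀ x (h : x ∈ Jᶜ), f x = c ⟨x, h⟩ := by
      intro x h
      have h2 : x ∉ J := Finset.mem_compl.mp h
      have h1 : x ∉ I := fun hh => h2 (hIJ hh)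
      simp [hf, h1, h2]
    have hfinvI : ∀ x (h : x ∈ I), finv x = a⁻¹ ⟨x, h⟩ := by intro x h; simp [hfinv, h]
    have hfinvD : ∀ x (h : x ∈ J \ I), finv x = b⁻¹ ⟨x, h⟩ := by
      intro x h
      obtain ⟨h2, h1⟩ := Finset.mem_sdiff.mp h
      simp [hfinv, h1, h2]
    have hfinvC : ∀ x (h : x ∈ Jᶜ), finv x = c⁻¹ ⟨x, h⟩ := by
      intro x h
      have h2 : x ∉ J := Finset.mem_compl.mp h
      have h1 : x ∉ I := fun hh => h2 (hIJ hh)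
      simp [hfinv, h1, h2]
    have cases3 : ∀ x : Fin m, x ∈ I ∨ x ∈ J \ I ∨ x ∈ Jᶜ := by
      intro x
      by_cases h : x ∈ I
      · exact Or.inl h
      · by_cases h2 : x ∈ J
        · exact Or.inr (Or.inl (Finset.mem_sdiff.mpr ⟨h2, h⟩))
        · exact Or.inr (Or.inr (Finset.mem_compl.mpr h2))
    have hli : Function.LeftInverse finv f := by
      intro x
      rcases cases3 x with h | h | h
      · rw [hfI x h, hfinvI _ (a ⟨x, h⟩).2]
        simp
      · rw [hfD x h, hfinvD _ (b ⟨x, h⟩).2]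
        simp
      · rw [hfC x h, hfinvC _ (c ⟨x, h⟩).2]
        simp
    have hri : Function.RightInverse finv f := by
      intro x
      rcases cases3 x with h | h | h
      · rw [hfinvI x h, hfI _ (a⁻¹ ⟨x, h⟩).2]
        simp
      · rw [hfinvD x h, hfD _ (b⁻¹ ⟨x, h⟩).2]
        simp
      · rw [hfinvC x h, hfC _ (c⁻¹ ⟨x, h⟩).2]
        simp
    set g : Equiv.Perm (Fin m) := ⟨f, finv, hli, hri⟩ with hg
    have hgK : ∀ K : Finset (Fin m), (∀ x, x ∈ K ↔ g x ∈ K) → g ∈ stab K := by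
      intro K hK
      show K.image ⇑g = K
      apply Finset.eq_of_subset_of_card_le
      · intro y hy
        obtain ⟨x, hx, rfl⟩ := Finset.mem_image.mp hy
        exact (hK x).mp hx
      · rw [Finset.card_image_of_injective _ g.injective]
    have hmemI : ∀ x, x ∈ I ↔ g x ∈ I := by
      intro x
      constructor
      · intro h
        show f x ∈ I
        rw [hfI x h]; exact (a ⟨x, h⟩).2
      · intro h
        rcases cases3 x with h' | h' | h'
        · exact h'
        · exfalso
          have : f x = b ⟨x, h'⟩ := hfD x h'
          rw [show g x = f x from rfl, this] at h
          exact (Finset.mem_sdiff.mp (b ⟨x, h'⟩).2).2 h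
        · exfalso
          have : f x = c ⟨x, h'⟩ := hfC x h'
          rw [show g x = f x from rfl, this] at h
          exact Finset.mem_compl.mp (c ⟨x, h'⟩).2 (hIJ h)
    have hmemJ : ∀ x, x ∈ J ↔ g x ∈ J := by
      intro x
      constructor
      · intro h
        by_cases h1 : x ∈ I
        · show f x ∈ J
          rw [hfI x h1]; exact hIJ (a ⟨x, h1⟩).2
        · show f x ∈ J
          rw [hfD x (Finset.mem_sdiff.mpr ⟨h, h1⟩)]
          exact (Finset.mem_sdiff.mp (b _).2).1
      · intro h
        rcases cases3 x with h' | h' | h'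
        · exact hIJ h'
        · exact (Finset.mem_sdiff.mp h').1
        · exfalso
          have : f x = c ⟨x, h'⟩ := hfC x h'
          rw [show g x = f x from rfl, this] at h
          exact Finset.mem_compl.mp (c ⟨x, h'⟩).2 h
    refine ⟨⟨g, hgK I hmemI, hgK J hmemJ⟩, ?_⟩
    rw [Prod.ext_iff, Prod.ext_iff]
    refine ⟨?_, ?_, ?_⟩
    · apply Equiv.ext
      intro x
      apply Subtype.ext
      exact hfI x.1 x.2
    · apply Equiv.ext
      intro x
      apply Subtype.ext
      exact hfD x.1 x.2
    · apply Equiv.ext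
      intro x
      apply Subtype.ext
      exact hfC x.1 x.2
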